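/- Let (A_α) be a directed system of commutative R-algebras with colimit A, and let f ∈ F(A), i.e., f : A ⊗_R C → A[z^{±1}] is a homomorphism of Hopf algebras over A extending all the u_n. Then there exists an index α and an element f_α ∈ F(A_α) (a Hopf algebra homomorphism A_α ⊗_R C → A_α[z^{±1}] extending all the u_n) whose base change along A_α → A equals f. -/

import Mathlib

open LaurentPolynomial TensorProduct

noncomputable section

/-- The comultiplication of the group Hopf algebra `B[G]` (each group element is grouplike),
as a `B`-algebra homomorphism `B[G] → B[G] ⊗[B] B[G]`. -/
def groupAlgComul (B : Type*) [CommRing B] (G : Type*) [AddCommMonoid G] :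
    AddMonoidAlgebra B G →ₐ[B] AddMonoidAlgebra B G ⊗[B] AddMonoidAlgebra B G :=
  AddMonoidAlgebra.lift B _ G
    { toFun := fun g => AddMonoidAlgebra.of B G g ⊗ₜ[B] AddMonoidAlgebra.of B G g
      map_one' := by
        simp only [map_one, Algebra.TensorProduct.one_def]
      map_mul' := fun x y => by
        simp only [map_mul, Algebra.TensorProduct.tmul_mul_tmul] }

/-- The counit of the group Hopf algebra `B[G]`, as a `B`-algebra homomorphism `B[G] → B`. -/
def groupAlgCounit (B : Type*) [CommRing B] (G : Type*) [AddCommMonoid G] :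
    AddMonoidAlgebra B G →ₐ[B] B :=
  AddMonoidAlgebra.lift B B G 1

/-- The homomorphism `A[G] → B[G]` of group algebras induced by an `R`-algebra homomorphism
`φ : A → B` on coefficients. -/
def groupAlgMapCoeff {R A B : Type*} [CommRing R] [CommRing A] [CommRing B]
    [Algebra R A] [Algebra R B] (G : Type*) [AddCommMonoid G] (φ : A →ₐ[R] B) :
    AddMonoidAlgebra A G →ₐ[R] AddMonoidAlgebra B G :=
  AddMonoidAlgebra.liftNCAlgHom (AddMonoidAlgebra.singleZeroAlgHom.comp φ)
    (AddMonoidAlgebra.of B G) fun _ _ => Commute.all _ _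

/-- The reduction map `A[z^{±1}] → A[z]/(z^N - 1)`, realized as the `A`-algebra homomorphism
from the group algebra of `ℤ` to the group algebra of `ℤ/Nℤ` induced by the canonical
projection `ℤ → ℤ/Nℤ`. -/
def laurentToCyclic (A : Type*) [CommRing A] (N : ℕ) :
    LaurentPolynomial A →ₐ[A] AddMonoidAlgebra A (ZMod N) :=
  AddMonoidAlgebra.lift A _ ℤ
    ((AddMonoidAlgebra.of A (ZMod N)).comp
      (AddMonoidHom.toMultiplicative (Int.castAddHom (ZMod N))))

/-- The projection `A[z]/(z^N - 1) → A[z]/(z^M - 1)` (for `M ∣ N`) sending `z` to `z`,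
realized as the map of group algebras induced by `ℤ/Nℤ → ℤ/Mℤ`. -/
def cyclicProj (A : Type*) [CommRing A] {M N : ℕ} (h : M ∣ N) :
    AddMonoidAlgebra A (ZMod N) →ₐ[A] AddMonoidAlgebra A (ZMod M) :=
  AddMonoidAlgebra.lift A _ (ZMod N)
    ((AddMonoidAlgebra.of A (ZMod M)).comp
      (AddMonoidHom.toMultiplicative (ZMod.castHom h (ZMod M)).toAddMonoidHom))

/-- The `R`-algebra homomorphism `C ⊗[R] C → A[G] ⊗[A] A[G]` induced by
`g : C → A[G]` on each factor. -/
def tensorSquare {R : Type*} [CommRing R] {C : Type*} [CommRing C] [Algebra R C]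
    {A : Type*} [CommRing A] [Algebra R A] {G : Type*} [AddCommMonoid G]
    (g : C →ₐ[R] AddMonoidAlgebra A G) :
    C ⊗[R] C →ₐ[R] AddMonoidAlgebra A G ⊗[A] AddMonoidAlgebra A G :=
  Algebra.TensorProduct.lift
    ((Algebra.TensorProduct.includeLeft :
        AddMonoidAlgebra A G →ₐ[R] AddMonoidAlgebra A G ⊗[A] AddMonoidAlgebra A G).comp g)
    (((Algebra.TensorProduct.includeRight :
        AddMonoidAlgebra A G →ₐ[A] AddMonoidAlgebra A G ⊗[A] AddMonoidAlgebra A G).restrictScalars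
          R).comp g)
    fun _ _ => Commute.all _ _

/-- An `R`-algebra homomorphism `g : C → A[G]` from an `R`-Hopf algebra `C` to the group
algebra `A[G]` over an `R`-algebra `A` is a homomorphism of Hopf algebras (equivalently, the
induced `A`-algebra homomorphism `A ⊗_R C → A[G]` is a homomorphism of Hopf algebras over `A`)
if it is compatible with the comultiplications and the counits. -/
def IsHopfAlgHomToGroupAlg {R : Type*} [CommRing R] {C : Type*} [CommRing C]
    [HopfAlgebra R C] {A : Type*} [CommRing A] [Algebra R A] {G : Type*} [AddCommMonoid G]
    (g : C →ₐ[R] AddMonoidAlgebra A G) : Prop :=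
  ((groupAlgComul A G).restrictScalars R).comp g =
      (tensorSquare g).comp (Bialgebra.comulAlgHom R C) ∧
    ((groupAlgCounit A G).restrictScalars R).comp g =
      (Algebra.ofId R A).comp (Bialgebra.counitAlgHom R C)

/-- The set `F(A)` of the paper (Theorem 2.1.2), in terms of restricted data: a homomorphism
of Hopf algebras `A ⊗_R C → A[z^{±1}]` over `A` corresponds, by the universal property of
base change, to an `R`-algebra homomorphism `g : C → A[z^{±1}]` compatible with
comultiplications and counits.  The membership conditions are: `g` is a Hopf algebra
homomorphism, and for every `n ≥ 0` the composite of `g` with the reduction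
`A[z^{±1}] → A[z]/(z^{ℓⁿ} - 1)` is the base change to `A` of `u_n`. -/
def laurentHopfHomSet {R : Type*} [CommRing R] {C : Type*} [CommRing C] [HopfAlgebra R C]
    (ℓ : ℕ) (u : ∀ n : ℕ, C →ₐ[R] AddMonoidAlgebra R (ZMod (ℓ ^ n)))
    (A : Type*) [CommRing A] [Algebra R A] : Set (C →ₐ[R] LaurentPolynomial A) :=
  {g | IsHopfAlgHomToGroupAlg g ∧ ∀ n : ℕ,
    ((laurentToCyclic A (ℓ ^ n)).restrictScalars R).comp g =
      (groupAlgMapCoeff (ZMod (ℓ ^ n)) (Algebra.ofId R A)).comp (u n)}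

section Lemmas

variable {R A B : Type*} [CommRing R] [CommRing A] [CommRing B] [Algebra R A] [Algebra R B]
variable {G : Type*} [AddCommMonoid G]

theorem groupAlgMapCoeff_single (φ : A →ₐ[R] B) (g : G) (a : A) :
    groupAlgMapCoeff G φ (AddMonoidAlgebra.single g a) = AddMonoidAlgebra.single g (φ a) := by
  show AddMonoidAlgebra.liftNC _ _ (AddMonoidAlgebra.single g a) = _
  rw [AddMonoidAlgebra.liftNC_single]
  simp only [AddMonoidHom.coe_coe, RingHom.coe_coe, AlgHom.coe_comp, Function.comp_apply,
    AddMonoidAlgebra.singleZeroAlgHom_apply, AddMonoidAlgebra.of_apply, toAdd_ofAdd,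
    AddMonoidAlgebra.single_mul_single, zero_add, mul_one]


theorem groupAlgMapCoeff_apply (φ : A →ₐ[R] B) (x : AddMonoidAlgebra A G) (g : G) :
    (groupAlgMapCoeff G φ x).coeff g = φ (x.coeff g) := by
  classical
  induction x using AddMonoidAlgebra.induction with
  | zero => simp
  | single_add g' a x _ _ ih =>
      rw [map_add]
      show (groupAlgMapCoeff G φ (AddMonoidAlgebra.single g' a) + groupAlgMapCoeff G φ x).coeff g = _
      rw [AddMonoidAlgebra.coeff_add, Finsupp.add_apply, groupAlgMapCoeff_single, ih,
        AddMonoidAlgebra.coeff_add, Finsupp.add_apply, map_add, AddMonoidAlgebra.coeff_single,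
        AddMonoidAlgebra.coeff_single, Finsupp.single_apply, Finsupp.single_apply]
      split <;> simp

end Lemmas
theorem laurentToCyclic_single (A : Type*) [CommRing A] (N : ℕ) (k : ℤ) (a : A) :
    laurentToCyclic A N (AddMonoidAlgebra.single k a) = AddMonoidAlgebra.single (k : ZMod N) a := by
  show laurentToCyclic A N (AddMonoidAlgebra.single k a) = _
  rw [laurentToCyclic, AddMonoidAlgebra.lift_single]
  simp [AddMonoidAlgebra.of_apply, AddMonoidAlgebra.smul_single]

theorem groupAlgCounit_single (A : Type*) [CommRing A] (G : Type*) [AddCommMonoid G]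
    (g : G) (a : A) : groupAlgCounit A G (AddMonoidAlgebra.single g a) = a := by
  show groupAlgCounit A G (AddMonoidAlgebra.single g a) = a
  rw [groupAlgCounit, AddMonoidAlgebra.lift_single]
  simp

theorem groupAlgComul_single (A : Type*) [CommRing A] (G : Type*) [AddCommMonoid G]
    (g : G) (a : A) :
    groupAlgComul A G (AddMonoidAlgebra.single g a) =
      AddMonoidAlgebra.single g a ⊗ₜ[A] AddMonoidAlgebra.single g (1 : A) := by
  show groupAlgComul A G (AddMonoidAlgebra.single g a) = _
  rw [groupAlgComul, AddMonoidAlgebra.lift_single]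
  show a • ((AddMonoidAlgebra.of A G (Multiplicative.ofAdd g)) ⊗ₜ[A]
    (AddMonoidAlgebra.of A G (Multiplicative.ofAdd g))) = _
  rw [TensorProduct.smul_tmul']
  simp [AddMonoidAlgebra.of_apply, AddMonoidAlgebra.smul_single]
section Comm

variable {R A B B' : Type*} [CommRing R] [CommRing A] [CommRing B] [CommRing B']
  [Algebra R A] [Algebra R B] [Algebra R B'] {G : Type*} [AddCommMonoid G]

theorem tensorSquare_tmul {C : Type*} [CommRing C] [Algebra R C]
    (g : C →ₐ[R] AddMonoidAlgebra A G) (x y : C) :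
    tensorSquare g (x ⊗ₜ[R] y) = g x ⊗ₜ[A] g y := by
  rw [tensorSquare, Algebra.TensorProduct.lift_tmul]
  show (g x ⊗ₜ[A] 1) * (1 ⊗ₜ[A] g y) = _
  rw [Algebra.TensorProduct.tmul_mul_tmul, mul_one, one_mul]

theorem laurentToCyclic_groupAlgMapCoeff (φ : A →ₐ[R] B) (N : ℕ) (x : AddMonoidAlgebra A ℤ) :
    laurentToCyclic B N (groupAlgMapCoeff ℤ φ x) =
      groupAlgMapCoeff (ZMod N) φ (laurentToCyclic A N x) := by
  induction x using AddMonoidAlgebra.induction with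
  | zero => simp
  | single_add k a x _ _ ih =>
      rw [map_add, map_add, map_add, map_add, ih, groupAlgMapCoeff_single,
        laurentToCyclic_single, laurentToCyclic_single, groupAlgMapCoeff_single]

theorem groupAlgCounit_groupAlgMapCoeff (φ : A →ₐ[R] B) (x : AddMonoidAlgebra A G) :
    groupAlgCounit B G (groupAlgMapCoeff G φ x) = φ (groupAlgCounit A G x) := by
  induction x using AddMonoidAlgebra.induction with
  | zero => simp
  | single_add g a x _ _ ih =>
      rw [map_add, map_add, map_add, map_add, ih, groupAlgMapCoeff_single,
        groupAlgCounit_single, groupAlgCounit_single]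

theorem groupAlgMapCoeff_comp_apply (φ : A →ₐ[R] B) (ψ : B →ₐ[R] B') (x : AddMonoidAlgebra A G) :
    groupAlgMapCoeff G ψ (groupAlgMapCoeff G φ x) = groupAlgMapCoeff G (ψ.comp φ) x := by
  induction x using AddMonoidAlgebra.induction with
  | zero => simp
  | single_add g a x _ _ ih =>
      rw [map_add, map_add, map_add, ih, groupAlgMapCoeff_single, groupAlgMapCoeff_single,
        groupAlgMapCoeff_single]
      rfl

theorem groupAlgComul_groupAlgMapCoeff (φ : R →ₐ[R] B) (x : AddMonoidAlgebra R G) :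
    groupAlgComul B G (groupAlgMapCoeff G φ x) =
      tensorSquare (groupAlgMapCoeff G φ) (groupAlgComul R G x) := by
  induction x using AddMonoidAlgebra.induction with
  | zero => simp
  | single_add g a x _ _ ih =>
      rw [map_add, map_add, map_add, map_add, ih, groupAlgMapCoeff_single,
        groupAlgComul_single, groupAlgComul_single, tensorSquare_tmul,
        groupAlgMapCoeff_single, groupAlgMapCoeff_single, map_one]

end Comm
section TensorTransfer

variable {R B : Type*} [CommRing R] [CommRing B] [Algebra R B]

/-- coefficients of a tensor square of group algebras of `ℤ` -/
def tcoeff (S : Type*) [CommRing S] :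
    AddMonoidAlgebra S ℤ ⊗[S] AddMonoidAlgebra S ℤ ≃ₗ[S] ((ℤ × ℤ) →₀ S) :=
  (TensorProduct.congr (AddMonoidAlgebra.coeffLinearEquiv S)
    (AddMonoidAlgebra.coeffLinearEquiv S)).trans (finsuppTensorFinsupp' S ℤ ℤ)

theorem finsuppTensorFinsupp'_tensorSquare (ψ : R →ₐ[R] B)
    (ξ : AddMonoidAlgebra R ℤ ⊗[R] AddMonoidAlgebra R ℤ) :
    tcoeff B (tensorSquare (groupAlgMapCoeff ℤ ψ) ξ) =
      Finsupp.mapRange ψ (map_zero ψ) (tcoeff R ξ) := by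
  induction ξ with
  | zero =>
      rw [map_zero, (tcoeff B).map_zero,
        (tcoeff R).map_zero]
      ext p
      simp
  | tmul x y =>
      rw [tensorSquare_tmul]
      ext ⟨i, j⟩
      rw [Finsupp.mapRange_apply]
      show finsuppTensorFinsupp' B ℤ ℤ
        ((groupAlgMapCoeff ℤ ψ x).coeff ⊗ₜ[B] (groupAlgMapCoeff ℤ ψ y).coeff) (i, j) = _
      rw [finsuppTensorFinsupp'_apply_apply]
      show _ = ψ ((finsuppTensorFinsupp' R ℤ ℤ (x.coeff ⊗ₜ[R] y.coeff)) (i, j))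
      rw [finsuppTensorFinsupp'_apply_apply, map_mul]
      rw [groupAlgMapCoeff_apply, groupAlgMapCoeff_apply]
  | add ξ₁ ξ₂ ih₁ ih₂ =>
      rw [map_add, (tcoeff B).map_add, (tcoeff R).map_add,
        Finsupp.mapRange_add (map_add ψ), ih₁, ih₂]

end TensorTransfer
section Transfer

variable {R A B : Type*} [CommRing R] [CommRing A] [CommRing B] [Algebra R A] [Algebra R B]
variable {G : Type*} [AddCommMonoid G]

theorem transfer_scalar (hker : ∀ x : R, algebraMap R A x = 0 → algebraMap R B x = 0)
    {x y : R} (h : algebraMap R A x = algebraMap R A y) :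
    algebraMap R B x = algebraMap R B y := by
  have : algebraMap R A (x - y) = 0 := by rw [map_sub, h, sub_self]
  have h2 := hker _ this
  rw [map_sub, sub_eq_zero] at h2
  exact h2

theorem transfer_free (hker : ∀ x : R, algebraMap R A x = 0 → algebraMap R B x = 0)
    {ξ₁ ξ₂ : AddMonoidAlgebra R G}
    (h : groupAlgMapCoeff G (Algebra.ofId R A) ξ₁ = groupAlgMapCoeff G (Algebra.ofId R A) ξ₂) :
    groupAlgMapCoeff G (Algebra.ofId R B) ξ₁ = groupAlgMapCoeff G (Algebra.ofId R B) ξ₂ := by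
  ext g
  rw [groupAlgMapCoeff_apply, groupAlgMapCoeff_apply, Algebra.ofId_apply, Algebra.ofId_apply]
  refine transfer_scalar hker ?_
  have : (groupAlgMapCoeff G (Algebra.ofId R A) ξ₁).coeff g =
      (groupAlgMapCoeff G (Algebra.ofId R A) ξ₂).coeff g := by rw [h]
  rwa [groupAlgMapCoeff_apply, groupAlgMapCoeff_apply, Algebra.ofId_apply, Algebra.ofId_apply]
    at this

theorem transfer_tensor (hker : ∀ x : R, algebraMap R A x = 0 → algebraMap R B x = 0)
    {ξ₁ ξ₂ : AddMonoidAlgebra R ℤ ⊗[R] AddMonoidAlgebra R ℤ}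
    (h : tensorSquare (groupAlgMapCoeff ℤ (Algebra.ofId R A)) ξ₁ =
      tensorSquare (groupAlgMapCoeff ℤ (Algebra.ofId R A)) ξ₂) :
    tensorSquare (groupAlgMapCoeff ℤ (Algebra.ofId R B)) ξ₁ =
      tensorSquare (groupAlgMapCoeff ℤ (Algebra.ofId R B)) ξ₂ := by
  have hA := congrArg (tcoeff A) h
  rw [finsuppTensorFinsupp'_tensorSquare, finsuppTensorFinsupp'_tensorSquare] at hA
  apply (tcoeff B).injective
  rw [finsuppTensorFinsupp'_tensorSquare, finsuppTensorFinsupp'_tensorSquare]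
  ext p
  rw [Finsupp.mapRange_apply, Finsupp.mapRange_apply, Algebra.ofId_apply, Algebra.ofId_apply]
  refine transfer_scalar hker ?_
  have : Finsupp.mapRange (Algebra.ofId R A) (map_zero _) (tcoeff R ξ₁) p =
      Finsupp.mapRange (Algebra.ofId R A) (map_zero _) (tcoeff R ξ₂) p := by
    rw [hA]
  rw [Finsupp.mapRange_apply, Finsupp.mapRange_apply] at this
  rwa [Algebra.ofId_apply, Algebra.ofId_apply] at this

end Transfer
section Window

variable {A : Type*} [CommRing A]

theorem laurentToCyclic_apply_window (M : ℕ) (x : LaurentPolynomial A) (S : Finset ℤ)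
    (hsupp : x.coeff.support ⊆ S)
    (hinj : ∀ k₁ ∈ S, ∀ k₂ ∈ S, ((k₁ : ZMod M) = (k₂ : ZMod M)) → k₁ = k₂)
    (k : ℤ) (hk : k ∈ S) : (laurentToCyclic A M x).coeff ((k : ZMod M)) = x.coeff k := by
  classical
  have hx : laurentToCyclic A M x =
      x.coeff.sum (fun k' a => AddMonoidAlgebra.single ((k' : ZMod M)) a) := by
    conv_lhs => rw [← AddMonoidAlgebra.sum_coeff_single x]
    rw [map_finsuppSum]
    exact Finset.sum_congr rfl fun k' _ => laurentToCyclic_single A M k' _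
  rw [hx, AddMonoidAlgebra.coeff_finsuppSum, Finsupp.sum_apply]
  rw [Finsupp.sum]
  have : ∀ k' ∈ x.coeff.support,
      (AddMonoidAlgebra.single ((k' : ZMod M)) (x.coeff k')).coeff ((k : ZMod M)) =
      if k' = k then x.coeff k' else 0 := by
    intro k' hk'
    rw [AddMonoidAlgebra.coeff_single, Finsupp.single_apply]
    by_cases h : k' = k
    · simp [h]
    · have : ¬ ((k' : ZMod M) = (k : ZMod M)) := fun hc => h (hinj k' (hsupp hk') k hk hc)
      simp [h, this]
  rw [Finset.sum_congr rfl this, Finset.sum_ite_eq' x.coeff.support k (fun k' => x.coeff k')]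
  by_cases h : k ∈ x.coeff.support
  · simp [h]
  · simp [h, Finsupp.notMem_support_iff.mp h]

end Window
section TS

variable {R A B : Type*} [CommRing R] [CommRing A] [CommRing B] [Algebra R A] [Algebra R B]
variable {G : Type*} [AddCommMonoid G]

theorem tensorSquare_map_linear {C C' : Type*} [CommRing C] [Algebra R C] [CommRing C']
    [Algebra R C'] (g : C' →ₐ[R] AddMonoidAlgebra A G) (h : C →ₐ[R] C') (ξ : C ⊗[R] C) :
    tensorSquare g (TensorProduct.map h.toLinearMap h.toLinearMap ξ) =
      tensorSquare (g.comp h) ξ := by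
  induction ξ with
  | zero => simp
  | tmul x y => rw [TensorProduct.map_tmul, tensorSquare_tmul, tensorSquare_tmul]; rfl
  | add ξ₁ ξ₂ ih₁ ih₂ => rw [map_add, map_add, map_add, ih₁, ih₂]

theorem tensorSquare_tensorSquare {C : Type*} [CommRing C] [Algebra R C]
    (ψ : R →ₐ[R] B) (g : C →ₐ[R] AddMonoidAlgebra R G) (ξ : C ⊗[R] C) :
    tensorSquare (groupAlgMapCoeff G ψ) (tensorSquare g ξ) =
      tensorSquare ((groupAlgMapCoeff G ψ).comp g) ξ := by
  induction ξ with
  | zero => simp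
  | tmul x y => rw [tensorSquare_tmul, tensorSquare_tmul, tensorSquare_tmul]; rfl
  | add ξ₁ ξ₂ ih₁ ih₂ => rw [map_add, map_add, map_add, ih₁, ih₂]

end TS

/-- Local finite presentation of the functor `F` (condition `(F₂)`, Lemma 2.3.3): let `ℓ` be a
prime invertible in `R`, `R` finitely generated over `ℤ`, `C` a finitely presented commutative
Hopf `R`-algebra, and `u_n : C → R[z]/(z^{ℓⁿ} - 1)` a compatible family of Hopf algebra
homomorphisms.  Let `(B i)` be a directed system of commutative `R`-algebras with colimit `A`
(witnessed by transition maps `t` and structure maps `φ i : B i → A` satisfying the concrete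
colimit axioms below).  Then each `f ∈ F(A)` descends to some `f_i ∈ F(B i)`: there are an
index `i` and an element `f_i ∈ F(B i)` whose base change along `B i → A` equals `f`. -/
theorem hopfHom_descends_to_finite_level
    {R : Type*} [CommRing R] {C : Type*} [CommRing C] [HopfAlgebra R C]
    {ℓ : ℕ} (hℓ : Nat.Prime ℓ) (hℓR : IsUnit (ℓ : R))
    (hR : Algebra.FiniteType ℤ R) (hC : Algebra.FinitePresentation R C)
    (u : ∀ n : ℕ, C →ₐ[R] AddMonoidAlgebra R (ZMod (ℓ ^ n)))
    (hu : ∀ n, IsHopfAlgHomToGroupAlg (u n))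
    (hucomp : ∀ n, (cyclicProj R (pow_dvd_pow ℓ (Nat.le_succ n))).comp (u (n + 1)) = u n)
    {ι : Type*} [Preorder ι] [IsDirected ι (· ≤ ·)] [Nonempty ι]
    (B : ι → Type*) [∀ i, CommRing (B i)] [∀ i, Algebra R (B i)]
    (t : ∀ i j, i ≤ j → (B i →ₐ[R] B j))
    (ht_id : ∀ i (x : B i), t i i le_rfl x = x)
    (ht_comp : ∀ i j k (hij : i ≤ j) (hjk : j ≤ k) (x : B i),
      t j k hjk (t i j hij x) = t i k (hij.trans hjk) x)
    (A : Type*) [CommRing A] [Algebra R A]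
    (φ : ∀ i, B i →ₐ[R] A)
    (hφ : ∀ i j (hij : i ≤ j) (x : B i), φ j (t i j hij x) = φ i x)
    (hexhaust : ∀ a : A, ∃ i, ∃ x : B i, φ i x = a)
    (heventually : ∀ i (x y : B i), φ i x = φ i y →
      ∃ j, ∃ hij : i ≤ j, t i j hij x = t i j hij y)
    (f : C →ₐ[R] LaurentPolynomial A) (hf : f ∈ laurentHopfHomSet ℓ u A) :
    ∃ i, ∃ fi ∈ laurentHopfHomSet ℓ u (B i),
      (groupAlgMapCoeff ℤ (φ i)).comp fi = f := by
  classical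
  obtain ⟨⟨hfComul, hfCounit⟩, hfu⟩ := hf
  -- R is Noetherian
  haveI := hR
  have hNoeth : IsNoetherianRing R := Algebra.FiniteType.isNoetherianRing ℤ R
  -- pick an index j killing the kernel of R → A
  have hkey : ∀ x : R, algebraMap R A x = 0 → ∃ j, algebraMap R (B j) x = 0 := by
    intro x hx
    have i₀ : ι := Classical.arbitrary ι
    have h1 : φ i₀ (algebraMap R (B i₀) x) = φ i₀ 0 := by
      rw [(φ i₀).commutes, hx, map_zero]
    obtain ⟨j, hij, hj⟩ := heventually i₀ _ _ h1
    refine ⟨j, ?_⟩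
    rw [map_zero, (t i₀ j hij).commutes x] at hj
    exact hj
  have hpush : ∀ i j (hij : i ≤ j) (x : R),
      algebraMap R (B i) x = 0 → algebraMap R (B j) x = 0 := by
    intro i j hij x hx
    rw [← (t i j hij).commutes x, hx, map_zero]
  obtain ⟨s, hs⟩ := hNoeth.noetherian (RingHom.ker (algebraMap R A))
  have hsker : ∀ x ∈ s, algebraMap R A x = 0 := by
    intro x hx
    have : x ∈ RingHom.ker (algebraMap R A) := by
      rw [← hs]
      exact Ideal.subset_span hx
    exact this
  have hjall : ∀ s' : Finset R, (∀ x ∈ s', algebraMap R A x = 0) →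
      ∃ j, ∀ x ∈ s', algebraMap R (B j) x = 0 := by
    intro s'
    induction s' using Finset.induction with
    | empty => exact fun _ => ⟨Classical.arbitrary ι, by simp⟩
    | @insert a s'' hmem ih =>
        intro hall
        obtain ⟨j₁, hj₁⟩ := ih (fun x hx => hall x (Finset.mem_insert_of_mem hx))
        obtain ⟨j₂, hj₂⟩ := hkey a (hall a (Finset.mem_insert_self a s''))
        obtain ⟨j, hja, hjb⟩ := directed_of (· ≤ ·) j₁ j₂
        refine ⟨j, ?_⟩
        intro x hx'
        rcases Finset.mem_insert.mp hx' with rfl | hx''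
        · exact hpush j₂ j hjb x hj₂
        · exact hpush j₁ j hja x (hj₁ x hx'')
  obtain ⟨j, hjs⟩ := hjall s hsker
  -- the key kernel-transfer property of j
  have hker : ∀ x : R, algebraMap R A x = 0 → algebraMap R (B j) x = 0 := by
    intro x hx
    have hxk : x ∈ Submodule.span R (↑s : Set R) := by rw [hs]; exact hx
    refine Submodule.span_induction ?_ ?_ ?_ ?_ hxk
    · exact fun y hy => hjs y hy
    · rw [map_zero]
    · intro y z _ _ hy hz
      rw [map_add, hy, hz, add_zero]
    · intro r y _ hy
      rw [smul_eq_mul, map_mul, hy, mul_zero]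
  -- presentation of C
  obtain ⟨m, π, hπsurj, -⟩ := hC.out
  set c : Fin m → C := fun r => π (MvPolynomial.X r) with hc
  -- degree bound
  set D : ℕ := Finset.univ.sup (fun r : Fin m => (f (c r)).coeff.support.sup (fun k => k.natAbs))
    with hDdef
  have hD : ∀ r, ∀ k ∈ (f (c r)).coeff.support, k.natAbs ≤ D := by
    intro r k hk
    exact le_trans (Finset.le_sup (f := fun k : ℤ => k.natAbs) hk)
      (Finset.le_sup (f := fun r : Fin m => (f (c r)).coeff.support.sup (fun k => k.natAbs))
        (Finset.mem_univ r))
  set n₀ : ℕ := 2 * D + 1 with hn₀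
  have hM : 2 * D + 1 ≤ ℓ ^ n₀ :=
    le_trans (Nat.le_of_lt (Nat.lt_two_pow_self)) (Nat.pow_le_pow_left hℓ.two_le _)
  set S : Finset ℤ := Finset.Icc (-(D : ℤ)) D with hS
  have hinj : ∀ k₁ ∈ S, ∀ k₂ ∈ S,
      ((k₁ : ZMod (ℓ ^ n₀)) = (k₂ : ZMod (ℓ ^ n₀))) → k₁ = k₂ := by
    intro k₁ hk₁ k₂ hk₂ h
    obtain ⟨h₁l, h₁r⟩ := Finset.mem_Icc.mp hk₁
    obtain ⟨h₂l, h₂r⟩ := Finset.mem_Icc.mp hk₂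
    have hdvd : ((ℓ ^ n₀ : ℕ) : ℤ) ∣ k₂ - k₁ := ((ZMod.intCast_eq_intCast_iff _ _ _).mp h).dvd
    have habs : |k₂ - k₁| < ((ℓ ^ n₀ : ℕ) : ℤ) := by
      have h2D : |k₂ - k₁| ≤ 2 * (D : ℤ) := by
        rw [abs_sub_le_iff]
        constructor <;> omega
      have : (2 * D + 1 : ℤ) ≤ ((ℓ ^ n₀ : ℕ) : ℤ) := by exact_mod_cast hM
      omega
    have := Int.eq_zero_of_abs_lt_dvd hdvd habs
    omega
  have hsupp : ∀ r, (f (c r)).coeff.support ⊆ S := by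
    intro r k hk
    have := hD r k hk
    rw [hS, Finset.mem_Icc]
    omega
  -- the coefficients of f (c r) come from R via u n₀
  have hstar : ∀ r, ∀ k ∈ S,
      algebraMap R A ((u n₀ (c r)).coeff ((k : ZMod (ℓ ^ n₀)))) = (f (c r)).coeff k := by
    intro r k hk
    have h1 := DFunLike.congr_fun (hfu n₀) (c r)
    have h2 : laurentToCyclic A (ℓ ^ n₀) (f (c r)) =
        groupAlgMapCoeff (ZMod (ℓ ^ n₀)) (Algebra.ofId R A) (u n₀ (c r)) := h1
    have h3 := congrArg (fun v : AddMonoidAlgebra A (ZMod (ℓ ^ n₀)) => v.coeff ((k : ZMod (ℓ ^ n₀)))) h2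
    rw [laurentToCyclic_apply_window (ℓ ^ n₀) (f (c r)) S (hsupp r) hinj k hk,
      groupAlgMapCoeff_apply, Algebra.ofId_apply] at h3
    exact h3.symm
  -- the canonical R-lift of f on generators
  set L : Fin m → AddMonoidAlgebra R ℤ :=
    fun r => ∑ k ∈ S, AddMonoidAlgebra.single k ((u n₀ (c r)).coeff ((k : ZMod (ℓ ^ n₀)))) with hLdef
  have hLcoeff : ∀ r (k : ℤ),
      (L r).coeff k = if k ∈ S then (u n₀ (c r)).coeff ((k : ZMod (ℓ ^ n₀))) else 0 := by
    intro r k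
    rw [hLdef]
    simp only
    rw [AddMonoidAlgebra.coeff_sum, Finsupp.finset_sum_apply]
    simp only [AddMonoidAlgebra.coeff_single, Finsupp.single_apply]
    exact Finset.sum_ite_eq' S k (fun k' => (u n₀ (c r)).coeff ((k' : ZMod (ℓ ^ n₀))))
  have hL : ∀ r, groupAlgMapCoeff ℤ (Algebra.ofId R A) (L r) = f (c r) := by
    intro r
    ext k
    rw [groupAlgMapCoeff_apply, Algebra.ofId_apply, hLcoeff]
    by_cases hk : k ∈ S
    · rw [if_pos hk]
      exact hstar r k hk
    · rw [if_neg hk, map_zero]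
      symm
      exact Finsupp.notMem_support_iff.mp (fun hmem => hk (hsupp r hmem))
  set g₀ : MvPolynomial (Fin m) R →ₐ[R] AddMonoidAlgebra R ℤ := MvPolynomial.aeval L with hg₀
  have hbcA : (groupAlgMapCoeff ℤ (Algebra.ofId R A)).comp g₀ = f.comp π := by
    apply MvPolynomial.algHom_ext
    intro r
    rw [AlgHom.comp_apply, AlgHom.comp_apply, hg₀, MvPolynomial.aeval_X]
    exact hL r
  have h1 : ∀ p, groupAlgMapCoeff ℤ (Algebra.ofId R A) (g₀ p) = f (π p) :=
    fun p => DFunLike.congr_fun hbcA p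
  set gt : MvPolynomial (Fin m) R →ₐ[R] AddMonoidAlgebra (B j) ℤ :=
    (groupAlgMapCoeff ℤ (Algebra.ofId R (B j))).comp g₀ with hgt
  have hgt0 : ∀ p ∈ RingHom.ker π, gt p = 0 := by
    intro p hp
    have hπp : π p = 0 := RingHom.mem_ker.mp hp
    have hA0 : groupAlgMapCoeff ℤ (Algebra.ofId R A) (g₀ p) =
        groupAlgMapCoeff ℤ (Algebra.ofId R A) 0 := by
      rw [map_zero, h1, hπp, map_zero]
    have := transfer_free hker hA0
    rw [map_zero] at this
    exact this
  set e := Ideal.quotientKerAlgEquivOfSurjective hπsurj with he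
  set fi : C →ₐ[R] AddMonoidAlgebra (B j) ℤ :=
    (Ideal.Quotient.liftₐ (RingHom.ker π) gt hgt0).comp e.symm.toAlgHom with hfi
  have hemk : ∀ p, e (Ideal.Quotient.mk (RingHom.ker π) p) = π p := fun p => rfl
  have hfiπ : ∀ p, fi (π p) = gt p := by
    intro p
    rw [hfi]
    show Ideal.Quotient.liftₐ (RingHom.ker π) gt hgt0 (e.symm (π p)) = gt p
    rw [← hemk p, AlgEquiv.symm_apply_apply]
    rw [Ideal.Quotient.liftₐ_apply]
    exact Ideal.Quotient.lift_mk (RingHom.ker π) _ _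
  have hfiπ' : fi.comp π = gt := AlgHom.ext hfiπ
  refine ⟨j, fi, ⟨⟨?_, ?_⟩, ?_⟩, ?_⟩
  · -- comultiplication
    apply AlgHom.ext
    intro x
    obtain ⟨p, rfl⟩ := hπsurj x
    show groupAlgComul (B j) ℤ (fi (π p)) = tensorSquare fi (Bialgebra.comulAlgHom R C (π p))
    rw [hfiπ, hgt]
    show groupAlgComul (B j) ℤ (groupAlgMapCoeff ℤ (Algebra.ofId R (B j)) (g₀ p)) = _
    rw [groupAlgComul_groupAlgMapCoeff]
    have hπlin : Function.Surjective ⇑(AlgHom.toLinearMap π) := hπsurj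
    obtain ⟨ξ, hξ⟩ := TensorProduct.map_surjective hπlin hπlin
      (Bialgebra.comulAlgHom R C (π p))
    rw [← hξ, tensorSquare_map_linear, hfiπ', hgt, ← tensorSquare_tensorSquare]
    refine transfer_tensor hker ?_
    rw [tensorSquare_tensorSquare, hbcA, ← tensorSquare_map_linear f π ξ, hξ,
      ← groupAlgComul_groupAlgMapCoeff, h1]
    exact DFunLike.congr_fun hfComul (π p)
  · -- counit
    apply AlgHom.ext
    intro x
    obtain ⟨p, rfl⟩ := hπsurj x
    show groupAlgCounit (B j) ℤ (fi (π p)) = Algebra.ofId R (B j) (Bialgebra.counitAlgHom R C (π p))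
    rw [hfiπ, hgt]
    show groupAlgCounit (B j) ℤ (groupAlgMapCoeff ℤ (Algebra.ofId R (B j)) (g₀ p)) = _
    rw [groupAlgCounit_groupAlgMapCoeff, Algebra.ofId_apply, Algebra.ofId_apply]
    refine transfer_scalar hker ?_
    rw [← Algebra.ofId_apply (R := R) (A := A), ← Algebra.ofId_apply (R := R) (A := A),
      ← groupAlgCounit_groupAlgMapCoeff, h1]
    exact DFunLike.congr_fun hfCounit (π p)
  · -- compatibility with the u n
    intro n
    apply AlgHom.ext
    intro x
    obtain ⟨p, rfl⟩ := hπsurj x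
    show laurentToCyclic (B j) (ℓ ^ n) (fi (π p)) =
      groupAlgMapCoeff (ZMod (ℓ ^ n)) (Algebra.ofId R (B j)) (u n (π p))
    rw [hfiπ, hgt]
    show laurentToCyclic (B j) (ℓ ^ n) (groupAlgMapCoeff ℤ (Algebra.ofId R (B j)) (g₀ p)) = _
    rw [laurentToCyclic_groupAlgMapCoeff]
    refine transfer_free hker ?_
    rw [← laurentToCyclic_groupAlgMapCoeff, h1]
    exact DFunLike.congr_fun (hfu n) (π p)
  · -- base change to A recovers f
    apply AlgHom.ext
    intro x
    obtain ⟨p, rfl⟩ := hπsurj x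
    show groupAlgMapCoeff ℤ (φ j) (fi (π p)) = f (π p)
    rw [hfiπ, hgt]
    show groupAlgMapCoeff ℤ (φ j) (groupAlgMapCoeff ℤ (Algebra.ofId R (B j)) (g₀ p)) = _
    rw [groupAlgMapCoeff_comp_apply]
    have hcomp : (φ j).comp (Algebra.ofId R (B j)) = Algebra.ofId R A := by
      apply AlgHom.ext
      intro r
      rw [AlgHom.comp_apply, Algebra.ofId_apply, Algebra.ofId_apply]
      exact (φ j).commutes r
    rw [hcomp]
    exact h1 p
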